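/- Let α₁, α₂, α₃ be pairwise coprime positive integers and β₁, β₂ positive integers with α₁β₁ + α₂β₂ = α₁α₂ + α₃. Set d := gcd(α₁ + 2β₂, α₂ + 2β₁). Then gcd(d, α₁) = 1. -/
import Mathlib


/-- With α₁, α₂, α₃ pairwise coprime positive integers and β₁, β₂ positive with
α₁β₁ + α₂β₂ = α₁α₂ + α₃, the number d = gcd(α₁ + 2β₂, α₂ + 2β₁) satisfies gcd(d, α₁) = 1. -/
theorem gcd_coprime_alpha (α₁ α₂ α₃ β₁ β₂ : ℕ) (h₁ : 0 < α₁) (h₂ : 0 < α₂) (h₃ : 0 < α₃)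
    (hβ₁ : 0 < β₁) (hβ₂ : 0 < β₂)
    (h₁₂ : Nat.Coprime α₁ α₂) (h₁₃ : Nat.Coprime α₁ α₃) (h₂₃ : Nat.Coprime α₂ α₃)
    (heq : α₁ * β₁ + α₂ * β₂ = α₁ * α₂ + α₃) :
    Nat.Coprime (Nat.gcd (α₁ + 2 * β₂) (α₂ + 2 * β₁)) α₁ := by
  by_contra hg
  set g := Nat.gcd (Nat.gcd (α₁ + 2 * β₂) (α₂ + 2 * β₁)) α₁ with hgdef
  have hgpos : 0 < g := Nat.gcd_pos_of_pos_right _ h₁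
  have hg2 : 2 ≤ g := by omega
  set p := g.minFac with hp
  have hpp : p.Prime := Nat.minFac_prime (by omega)
  have hpg : p ∣ g := Nat.minFac_dvd g
  have hpα₁ : p ∣ α₁ := hpg.trans (Nat.gcd_dvd_right _ _)
  have hpd : p ∣ Nat.gcd (α₁ + 2 * β₂) (α₂ + 2 * β₁) := hpg.trans (Nat.gcd_dvd_left _ _)
  have hp1 : p ∣ α₁ + 2 * β₂ := hpd.trans (Nat.gcd_dvd_left _ _)
  have hp2 : p ∣ α₂ + 2 * β₁ := hpd.trans (Nat.gcd_dvd_right _ _)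
  have hpb : p ∣ 2 * β₂ := (Nat.dvd_add_right hpα₁).mp hp1
  -- p divides 2*α₃
  have h2a3 : p ∣ 2 * α₃ := by
    have hA : p ∣ 2 * (α₁ * β₁) + α₂ * (2 * β₂) :=
      Dvd.dvd.add ((hpα₁.mul_right β₁).mul_left 2) (hpb.mul_left α₂)
    have hB : p ∣ 2 * (α₁ * α₂) := (hpα₁.mul_right α₂).mul_left 2
    have hkey : 2 * (α₁ * β₁) + α₂ * (2 * β₂) = 2 * (α₁ * α₂) + 2 * α₃ := by ring_nf; omega
    have := hkey ▸ hA
    exact (Nat.dvd_add_right hB).mp this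
  rcases (Nat.Prime.dvd_mul hpp).mp h2a3 with h2 | ha3
  · have hp2' : p = 2 := (Nat.prime_dvd_prime_iff_eq hpp Nat.prime_two).mp h2
    have : p ∣ α₂ := by
      have : p ∣ 2 * β₁ := hp2' ▸ Dvd.dvd.mul_right (dvd_refl 2) β₁
      exact (Nat.dvd_add_iff_left this).mpr hp2
    have : p ∣ Nat.gcd α₁ α₂ := Nat.dvd_gcd hpα₁ this
    rw [h₁₂] at this
    exact Nat.Prime.one_lt hpp |>.ne' (Nat.dvd_one.mp this)
  · have : p ∣ Nat.gcd α₁ α₃ := Nat.dvd_gcd hpα₁ ha3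
    rw [h₁₃] at this
    exact Nat.Prime.one_lt hpp |>.ne' (Nat.dvd_one.mp this)
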